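/- Let n be a real parameter with 2 < n < 4, let 0 < R < 1, ρ(r) = 2/(1−r²), and let φ : [0,R] → ℝ be twice continuously differentiable with φ(0) = 1, φ'(0) = 0, and φ(R) = 0. Then there exist constants C > 0 and ε0 > 0 such that for all ε ∈ (0, ε0): | ∫_0^R φ(r)²·(ε+r²)^{2−n}·ρ(r)²·r^{n−1} dr − ∫_0^R φ(r)²·r^{3−n}·ρ(r)² dr | ≤ C·ε^{(4−n)/2}. -/

import Mathlib

open Real Set

noncomputable section

open MeasureTheory

lemma rpow_sub_rpow_le_aux {x ε s : ℝ} (hx : 0 < x) (hε : 0 ≤ ε) (hs : s < 0) :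
    x ^ s - (x + ε) ^ s ≤ (-s) * ε * x ^ (s - 1) := by
  have key : ‖(x + ε) ^ s - x ^ s‖ ≤ (-s) * x ^ (s - 1) * ‖(x + ε) - x‖ := by
    refine Convex.norm_image_sub_le_of_norm_hasDerivWithin_le
      (f := fun u : ℝ => u ^ s) (f' := fun u : ℝ => s * u ^ (s - 1)) (s := Icc x (x + ε))
      (fun u hu => ?_) (fun u hu => ?_) (convex_Icc _ _) (left_mem_Icc.2 (by linarith))
      (right_mem_Icc.2 (by linarith))
    · exact (Real.hasDerivAt_rpow_const (Or.inl (by nlinarith [hu.1] : u ≠ 0))).hasDerivWithinAt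
    · have hu0 : 0 < u := lt_of_lt_of_le hx hu.1
      rw [norm_mul, Real.norm_eq_abs, Real.norm_eq_abs, abs_of_neg hs,
        abs_of_pos (Real.rpow_pos_of_pos hu0 _)]
      have := Real.rpow_le_rpow_of_nonpos hx hu.1 (by linarith : s - 1 ≤ 0)
      nlinarith
  rw [Real.norm_eq_abs, Real.norm_eq_abs, add_sub_cancel_left, abs_of_nonneg hε] at key
  have := abs_le.1 key
  linarith [this.1]

-- rpow exponent algebra on r > 0
lemma pow_alg1 {n r : ℝ} (hr : 0 < r) :
    r ^ (n - 1) * ((r ^ 2 : ℝ) ^ (2 - n)) = r ^ (3 - n) := by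
  rw [show ((r:ℝ) ^ 2) = r ^ ((2:ℕ):ℝ) by rw [Real.rpow_natCast],
    ← Real.rpow_mul hr.le, ← Real.rpow_add hr]
  congr 1; ring

lemma pow_alg2 {n r : ℝ} (hr : 0 < r) :
    r ^ (n - 1) * ((r ^ 2 : ℝ) ^ (1 - n)) = r ^ (1 - n) := by
  rw [show ((r:ℝ) ^ 2) = r ^ ((2:ℕ):ℝ) by rw [Real.rpow_natCast],
    ← Real.rpow_mul hr.le, ← Real.rpow_add hr]
  ring_nf

lemma sqrt_rpow_eq {ε p : ℝ} (hε : 0 ≤ ε) : (Real.sqrt ε) ^ p = ε ^ (p / 2) := by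
  rw [Real.sqrt_eq_rpow, ← Real.rpow_mul hε]
  ring_nf

-- integrability of the key function
lemma h_integrableOn {n R ε : ℝ} (hn2 : 2 < n) (hn4 : n < 4) (hε : 0 < ε) :
    IntegrableOn (fun r : ℝ => r ^ (n - 1) * ((r ^ 2 : ℝ) ^ (2 - n) - (ε + r ^ 2) ^ (2 - n)))
      (Ioc (0:ℝ) R) := by
  have h1 : IntegrableOn (fun r : ℝ => r ^ (3 - n)) (Ioc (0:ℝ) R) := by
    rcases le_or_gt 0 R with hR | hR
    · exact (intervalIntegrable_iff_integrableOn_Ioc_of_le hR).mp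
        (intervalIntegral.intervalIntegrable_rpow' (by linarith))
    · simp [Ioc_eq_empty (by linarith : ¬ (0:ℝ) < R)]
  have h1' : IntegrableOn (fun r : ℝ => r ^ (n - 1) * ((r ^ 2 : ℝ) ^ (2 - n))) (Ioc (0:ℝ) R) :=
    h1.congr_fun (fun r hr => (pow_alg1 hr.1).symm) measurableSet_Ioc
  have hcont : Continuous (fun r : ℝ => r ^ (n - 1) * ((ε + r ^ 2) ^ (2 - n))) := by
    apply Continuous.mul
    · exact continuous_id.rpow_const (fun x => Or.inr (by linarith))
    · exact (continuous_const.add (continuous_pow 2)).rpow_const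
        (fun x => Or.inl (ne_of_gt (by show (0:ℝ) < ε + x ^ 2; positivity)))
  have h2 : IntegrableOn (fun r : ℝ => r ^ (n - 1) * ((ε + r ^ 2) ^ (2 - n))) (Ioc (0:ℝ) R) :=
    hcont.integrableOn_Ioc
  have h3 : IntegrableOn (fun r : ℝ => r ^ (n - 1) * ((r ^ 2 : ℝ) ^ (2 - n))
      - r ^ (n - 1) * ((ε + r ^ 2) ^ (2 - n))) (Ioc (0:ℝ) R) := h1'.sub h2
  exact h3.congr_fun (fun r _ => by ring) measurableSet_Ioc

lemma core_integral_bound {n R ε : ℝ} (hn2 : 2 < n) (hn4 : n < 4) (hR0 : 0 < R)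
    (hε : 0 < ε) (hεR : ε < R ^ 2) :
    ∫ r in Ioc (0:ℝ) R, r ^ (n - 1) * ((r ^ 2 : ℝ) ^ (2 - n) - (ε + r ^ 2) ^ (2 - n))
      ≤ (1 / (4 - n) + 1) * ε ^ ((4 - n) / 2) := by
  set h : ℝ → ℝ := fun r => r ^ (n - 1) * ((r ^ 2 : ℝ) ^ (2 - n) - (ε + r ^ 2) ^ (2 - n)) with hh
  set a : ℝ := Real.sqrt ε with ha
  have ha0 : 0 < a := Real.sqrt_pos.2 hε
  have haR : a < R := by
    have : Real.sqrt ε < Real.sqrt (R ^ 2) := Real.sqrt_lt_sqrt hε.le hεR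
    rwa [Real.sqrt_sq hR0.le] at this
  -- split
  have hint1 : IntegrableOn h (Ioc 0 a) :=
    (h_integrableOn hn2 hn4 hε (R := R)).mono_set (Ioc_subset_Ioc le_rfl haR.le)
  have hint2 : IntegrableOn h (Ioc a R) :=
    (h_integrableOn hn2 hn4 hε (R := R)).mono_set (Ioc_subset_Ioc ha0.le le_rfl)
  have hsplit : ∫ r in Ioc (0:ℝ) R, h r = (∫ r in Ioc (0:ℝ) a, h r) + ∫ r in Ioc a R, h r := by
    rw [← intervalIntegral.integral_of_le ha0.le, ← intervalIntegral.integral_of_le haR.le,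
      ← intervalIntegral.integral_of_le (ha0.trans haR).le]
    exact (intervalIntegral.integral_add_adjacent_intervals
      ((intervalIntegrable_iff_integrableOn_Ioc_of_le ha0.le).mpr hint1)
      ((intervalIntegrable_iff_integrableOn_Ioc_of_le haR.le).mpr hint2)).symm
  -- first piece
  have hb1 : (∫ r in Ioc (0:ℝ) a, h r) ≤ ε ^ ((4 - n) / 2) * (1 / (4 - n)) := by
    have hmono : (∫ r in Ioc (0:ℝ) a, h r) ≤ ∫ r in Ioc (0:ℝ) a, r ^ (3 - n) := by
      refine setIntegral_mono_on hint1 ?_ measurableSet_Ioc (fun r hr => ?_)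
      · exact (intervalIntegrable_iff_integrableOn_Ioc_of_le ha0.le).mp
          (intervalIntegral.intervalIntegrable_rpow' (by linarith))
      · have hr0 := hr.1
        have h1 : h r ≤ r ^ (n - 1) * ((r ^ 2 : ℝ) ^ (2 - n)) := by
          have e1 : (0:ℝ) ≤ (ε + r ^ 2) ^ (2 - n) := Real.rpow_nonneg (by positivity) _
          have e2 : (0:ℝ) ≤ r ^ (n - 1) := Real.rpow_nonneg hr0.le _
          simp only [hh]; nlinarith
        calc h r ≤ r ^ (n - 1) * ((r ^ 2 : ℝ) ^ (2 - n)) := h1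
          _ = r ^ (3 - n) := pow_alg1 hr0
    have hval : (∫ r in Ioc (0:ℝ) a, (r:ℝ) ^ (3 - n)) = ε ^ ((4 - n) / 2) * (1 / (4 - n)) := by
      rw [← intervalIntegral.integral_of_le ha0.le,
        integral_rpow (Or.inl (by linarith : (-1:ℝ) < 3 - n))]
      rw [Real.zero_rpow (by intro hc; apply absurd hc; intro hc2; linarith [hc2] : 3 - n + 1 ≠ 0)]
      rw [show (3:ℝ) - n + 1 = 4 - n by ring, sqrt_rpow_eq hε.le]
      field_simp
      rw [sub_zero]
    linarith [hmono, hval.le, hval.ge]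
  -- second piece
  have hb2 : (∫ r in Ioc a R, h r) ≤ ε ^ ((4 - n) / 2) := by
    have hmono : (∫ r in Ioc a R, h r) ≤ ∫ r in Ioc a R, (n - 2) * ε * r ^ (1 - n) := by
      refine setIntegral_mono_on hint2 ?_ measurableSet_Ioc (fun r hr => ?_)
      · have hbase : IntegrableOn (fun r : ℝ => r ^ (1 - n)) (Ioc a R) :=
          (intervalIntegrable_iff_integrableOn_Ioc_of_le haR.le).mp
          (intervalIntegral.intervalIntegrable_rpow (Or.inr (by
            rw [uIcc_of_le haR.le]
            exact fun hc => absurd hc.1 (by simpa using ha0))))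
        exact hbase.const_mul ((n - 2) * ε)
      · have hr0 : 0 < r := ha0.trans hr.1
        have hx : (0:ℝ) < r ^ 2 := by positivity
        have key := rpow_sub_rpow_le_aux hx hε.le (by linarith : (2:ℝ) - n < 0)
        have e2 : (0:ℝ) ≤ r ^ (n - 1) := Real.rpow_nonneg hr0.le _
        have h2 : h r ≤ r ^ (n - 1) * ((-(2 - n)) * ε * (r ^ 2 : ℝ) ^ (1 - n)) := by
          simp only [hh]
          rw [show (1:ℝ) - n = 2 - n - 1 by ring]
          have := mul_le_mul_of_nonneg_left key e2
          simpa [add_comm ε (r^2)] using this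
        calc h r ≤ r ^ (n - 1) * ((-(2 - n)) * ε * (r ^ 2 : ℝ) ^ (1 - n)) := h2
          _ = (n - 2) * ε * r ^ (1 - n) := by
              rw [show r ^ (n - 1) * ((-(2 - n)) * ε * (r ^ 2 : ℝ) ^ (1 - n))
                = (n - 2) * ε * (r ^ (n - 1) * ((r ^ 2 : ℝ) ^ (1 - n))) from by ring,
                pow_alg2 hr0]
    have hval : (∫ r in Ioc a R, (n - 2) * ε * r ^ (1 - n)) ≤ ε ^ ((4 - n) / 2) := by
      rw [← intervalIntegral.integral_of_le haR.le, intervalIntegral.integral_const_mul,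
        integral_rpow (Or.inr ⟨by intro hc; linarith [hc],
          by rw [uIcc_of_le haR.le]; exact fun hc => absurd hc.1 (by simpa using ha0)⟩)]
      rw [show (1:ℝ) - n + 1 = 2 - n by ring, sqrt_rpow_eq hε.le]
      have hRn : (0:ℝ) ≤ R ^ (2 - n) := Real.rpow_nonneg hR0.le _
      have hepow : ε * ε ^ ((2 - n) / 2) = ε ^ ((4 - n) / 2) := by
        rw [show (4 - n) / 2 = 1 + (2 - n) / 2 by ring, Real.rpow_add hε, Real.rpow_one]
      have hne : (2:ℝ) - n ≠ 0 := by intro hc; linarith [hc]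
      have : (n - 2) * ε * ((R ^ (2 - n) - ε ^ ((2 - n) / 2)) / (2 - n))
          = ε * (ε ^ ((2 - n) / 2) - R ^ (2 - n)) := by field_simp; ring
      rw [this]
      nlinarith [hepow]
    linarith
  have hepos : (0:ℝ) ≤ ε ^ ((4 - n) / 2) := Real.rpow_nonneg hε.le _
  rw [hsplit]
  nlinarith [hb1, hb2]

/-- Claim 3.1: asymptotics, as `ε → 0⁺`, of the `L²`-type term
`∫_0^R φ²(ε+r²)^{2-n} ρ² r^{n-1} dr` of the Brezis–Nirenberg quotient for the
test function `v_ε(r) = φ(r)(ε+r²)^{-(n-2)/2}`. -/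
theorem l2_term_asymptotics (n R : ℝ) (hn2 : 2 < n) (hn4 : n < 4)
    (hR0 : 0 < R) (hR1 : R < 1)
    (ρ : ℝ → ℝ) (hρ : ρ = fun r : ℝ => 2 / (1 - r ^ 2))
    (φ : ℝ → ℝ) (hφ : ContDiffOn ℝ 2 φ (Icc 0 R))
    (hφ0 : φ 0 = 1) (hφ'0 : derivWithin φ (Icc 0 R) 0 = 0) (hφR : φ R = 0) :
    ∃ C > (0:ℝ), ∃ ε0 > (0:ℝ), ∀ ε ∈ Ioo (0:ℝ) ε0,
      |(∫ r in (0:ℝ)..R, (φ r) ^ 2 * (ε + r ^ 2) ^ (2 - n) * (ρ r) ^ 2 * r ^ (n - 1))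
        - ∫ r in (0:ℝ)..R, (φ r) ^ 2 * r ^ (3 - n) * (ρ r) ^ 2|
      ≤ C * ε ^ ((4 - n) / 2) := by
  have hρa : ∀ r : ℝ, ρ r = 2 / (1 - r ^ 2) := fun r => by rw [hρ]
  have h4n : (0:ℝ) < 4 - n := by linarith
  have hφc : ContinuousOn φ (Icc 0 R) := hφ.continuousOn
  have hρc : ContinuousOn ρ (Icc 0 R) := by
    rw [hρ]
    exact continuousOn_const.div (by fun_prop)
      (fun r hr => by nlinarith [hr.1, hr.2])
  set q : ℝ → ℝ := fun r => φ r ^ 2 * ρ r ^ 2 with hq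
  have hqc : ContinuousOn q (Icc 0 R) := (hφc.pow 2).mul (hρc.pow 2)
  obtain ⟨M, hM⟩ := isCompact_Icc.exists_bound_of_continuousOn hqc
  have hM0 : 0 ≤ M := le_trans (norm_nonneg _) (hM 0 (left_mem_Icc.2 hR0.le))
  have hC0 : (0:ℝ) < M * (1 / (4 - n) + 1) + 1 := by
    have : (0:ℝ) < 1 / (4 - n) := by positivity
    nlinarith
  refine ⟨M * (1 / (4 - n) + 1) + 1, hC0, R ^ 2, by positivity, fun ε hε => ?_⟩
  obtain ⟨hε0, hεR⟩ := hε
  set F : ℝ → ℝ := fun r => (φ r) ^ 2 * (ε + r ^ 2) ^ (2 - n) * (ρ r) ^ 2 * r ^ (n - 1) with hF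
  set G : ℝ → ℝ := fun r => (φ r) ^ 2 * r ^ (3 - n) * (ρ r) ^ 2 with hG
  set h : ℝ → ℝ := fun r => r ^ (n - 1) * ((r ^ 2 : ℝ) ^ (2 - n) - (ε + r ^ 2) ^ (2 - n)) with hh
  -- integrability
  have hFc : ContinuousOn F (Icc 0 R) := by
    refine (((hφc.pow 2).mul ?_).mul (hρc.pow 2)).mul ?_
    · exact ((continuous_const.add (continuous_pow 2)).rpow_const
        (fun x => Or.inl (ne_of_gt (by show (0:ℝ) < ε + x ^ 2; positivity)))).continuousOn
    · exact (continuous_id.rpow_const (fun x => Or.inr (by linarith))).continuousOn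
  have hFi : IntervalIntegrable F volume 0 R := by
    apply ContinuousOn.intervalIntegrable
    rwa [uIcc_of_le hR0.le]
  have hGi : IntervalIntegrable G volume 0 R := by
    have hr3 : IntervalIntegrable (fun r : ℝ => r ^ (3 - n)) volume 0 R :=
      intervalIntegral.intervalIntegrable_rpow' (by linarith)
    have := (hr3.continuousOn_mul (g := fun r => (φ r) ^ 2)
      (by rw [uIcc_of_le hR0.le]; exact hφc.pow 2)).mul_continuousOn
      (g := fun r => (ρ r) ^ 2) (by rw [uIcc_of_le hR0.le]; exact hρc.pow 2)
    exact this
  have hFI : IntegrableOn F (Ioc 0 R) :=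
    (intervalIntegrable_iff_integrableOn_Ioc_of_le hR0.le).mp hFi
  have hGI : IntegrableOn G (Ioc 0 R) :=
    (intervalIntegrable_iff_integrableOn_Ioc_of_le hR0.le).mp hGi
  have hhI : IntegrableOn h (Ioc 0 R) := h_integrableOn hn2 hn4 hε0
  -- rewrite the difference
  have hFGq : ∀ r ∈ Ioc (0:ℝ) R, F r - G r = -(q r * h r) := by
    intro r hr
    have hp := pow_alg1 (n := n) hr.1
    simp only [hF, hG, hq, hh, ← hp]
    ring
  have hqhI : IntegrableOn (fun r => q r * h r) (Ioc 0 R) := by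
    have hsub : IntegrableOn (fun r => F r - G r) (Ioc 0 R) := hFI.sub hGI
    have hneg : IntegrableOn (fun r => -(F r - G r)) (Ioc 0 R) := hsub.neg
    exact hneg.congr_fun (fun r hr => by show -(F r - G r) = _; rw [hFGq r hr, neg_neg]) measurableSet_Ioc
  have hqh_nonneg : ∀ r ∈ Ioc (0:ℝ) R, 0 ≤ q r * h r := by
    intro r hr
    have hr0 := hr.1
    have h1 : (0:ℝ) ≤ r ^ (n - 1) := Real.rpow_nonneg hr0.le _
    have h2 : (ε + r ^ 2) ^ (2 - n) ≤ (r ^ 2 : ℝ) ^ (2 - n) :=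
      Real.rpow_le_rpow_of_nonpos (by positivity) (by linarith) (by linarith)
    have hq0 : (0:ℝ) ≤ q r := by simp only [hq]; positivity
    have hh0 : (0:ℝ) ≤ h r := by simp only [hh]; nlinarith
    positivity
  have hD : (∫ r in (0:ℝ)..R, F r) - (∫ r in (0:ℝ)..R, G r)
      = -(∫ r in Ioc (0:ℝ) R, q r * h r) := by
    rw [intervalIntegral.integral_of_le hR0.le, intervalIntegral.integral_of_le hR0.le,
      ← integral_sub hFI hGI,
      setIntegral_congr_fun measurableSet_Ioc (fun r hr => hFGq r hr), integral_neg]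
  have habs : |(∫ r in (0:ℝ)..R, F r) - (∫ r in (0:ℝ)..R, G r)|
      = ∫ r in Ioc (0:ℝ) R, q r * h r := by
    rw [hD, abs_neg, abs_of_nonneg (setIntegral_nonneg measurableSet_Ioc hqh_nonneg)]
  have hbound : (∫ r in Ioc (0:ℝ) R, q r * h r)
      ≤ M * ((1 / (4 - n) + 1) * ε ^ ((4 - n) / 2)) := by
    have step1 : (∫ r in Ioc (0:ℝ) R, q r * h r) ≤ ∫ r in Ioc (0:ℝ) R, M * h r := by
      refine setIntegral_mono_on hqhI (hhI.const_mul M) measurableSet_Ioc (fun r hr => ?_)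
      have hqM : q r ≤ M := le_trans (le_abs_self _) (hM r (Ioc_subset_Icc_self hr))
      have hh0 : (0:ℝ) ≤ h r := by
        have := hqh_nonneg r hr
        have hr0 := hr.1
        have h1 : (0:ℝ) ≤ r ^ (n - 1) := Real.rpow_nonneg hr0.le _
        have h2 : (ε + r ^ 2) ^ (2 - n) ≤ (r ^ 2 : ℝ) ^ (2 - n) :=
          Real.rpow_le_rpow_of_nonpos (by positivity) (by linarith) (by linarith)
        simp only [hh]; nlinarith
      exact mul_le_mul_of_nonneg_right hqM hh0
    have step2 : (∫ r in Ioc (0:ℝ) R, M * h r)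
        = M * ∫ r in Ioc (0:ℝ) R, h r := integral_const_mul M _
    have step3 := core_integral_bound hn2 hn4 hR0 hε0 hεR
    calc (∫ r in Ioc (0:ℝ) R, q r * h r) ≤ M * ∫ r in Ioc (0:ℝ) R, h r := by
          rw [← step2]; exact step1
      _ ≤ M * ((1 / (4 - n) + 1) * ε ^ ((4 - n) / 2)) :=
          mul_le_mul_of_nonneg_left step3 hM0
  have hεp : (0:ℝ) ≤ ε ^ ((4 - n) / 2) := Real.rpow_nonneg hε0.le _
  calc |(∫ r in (0:ℝ)..R, F r) - ∫ r in (0:ℝ)..R, G r|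
      = ∫ r in Ioc (0:ℝ) R, q r * h r := habs
    _ ≤ M * ((1 / (4 - n) + 1) * ε ^ ((4 - n) / 2)) := hbound
    _ ≤ (M * (1 / (4 - n) + 1) + 1) * ε ^ ((4 - n) / 2) := by nlinarith

end
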